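/- Let g₀ : ℝ × ℤ × ℤ → Mat(m×m, ℂ) be an invertible solution of the semi-discrete chiral model equation (g₀ g₀_{,1}^{-1})_t + (g₀ g₀_{,2}^{-1})_{,1,-2} − g₀ g₀_{,2}^{-1} = 0. Let P, Q be n×n matrix functions with P_t = 0, P_{,2} = P, Q_t = 0, Q_{,2} = Q, let ω̃ be an n×n matrix function (entrywise differentiable in t) with ω̃_{,2} = ω̃, and set γ₁ := ω̃ P − Q ω̃_{,1}, γ₂ := −ω̃_t. Let θ (of size m×n) and η (of size n×m) be entrywise differentiable in t and satisfy θ_{,-2} = −(θ P)_{,-1} − g₀_{,-1} g₀^{-1} θ, θ_t = g₀ g₀_{,2}^{-1} θ_{,2}, η_{,2} = −Q η_{,1} − η g₀ g₀_{,1}^{-1}, η_t = −(η g₀)_{,-2} g₀^{-1}. Let Ω̃ be an invertible n×n matrix function, entrywise differentiable in t, satisfying Ω̃_{,2} − Ω̃ = η θ, Ω̃_{,1,-2} − (I + Q) Ω̃_{,1} + Ω̃ P + (η_{,1,-2} − η) θ_{,1,-2} − γ₁ = 0, and Ω̃_t = −η_t θ − γ₂. Define g := (I − θ Ω̃_{,2}^{-1}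 η) g₀, q̃ := θ Ω̃_{,2}^{-1}, r̃ := Ω̃^{-1} η, and assume g is invertible. Then the following equations hold: (1) (g g_{,1}^{-1})_t + (g g_{,2}^{-1})_{,1,-2} − g g_{,2}^{-1} = (q̃_{,-2} γ₂ r̃)_{,2} − (q̃_{,-2} γ₂ r̃)_{,1} − (q̃ γ₁ r̃_{,1})_t; (2) q̃_{,1,-2} = −q̃ Q − g g_{,1}^{-1} q̃_{,1} − q̃ γ₁ (Ω̃_{,2}^{-1} + r̃ q̃)_{,1}; (3) q̃_t = g g_{,2}^{-1} q̃_{,2} + q̃ γ₂ (Ω̃_{,2}^{-1} + r̃ q̃)_{,2}; (4) r̃_{,2} = −P r̃_{,1} − r̃ g g_{,1}^{-1} + (Ω̃^{-1} − r̃ q̃) γ₁ r̃_{,1}; (5) r̃_t = −(r̃ g)_{,-2} g^{-1} + (Ω̃^{-1} − r̃ q̃)_{,-2} γ₂ r̃. -/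

import Mathlib

open Matrix

set_option maxHeartbeats 2000000

open Matrix

namespace SDChiral

/-- Entrywise derivative of a matrix-valued function. -/
def MD {p q : ℕ} (A : ℝ → Matrix (Fin p) (Fin q) ℂ) (A' : Matrix (Fin p) (Fin q) ℂ)
    (t : ℝ) : Prop :=
  ∀ a b, HasDerivAt (fun s => A s a b) (A' a b) t

namespace MD

variable {p q r : ℕ} {t : ℝ}

theorem const (C : Matrix (Fin p) (Fin q) ℂ) : MD (fun _ => C) 0 t :=
  fun a b => hasDerivAt_const t (C a b)

theorem add {A B : ℝ → Matrix (Fin p) (Fin q) ℂ} {A' B'}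
    (hA : MD A A' t) (hB : MD B B' t) :
    MD (fun s => A s + B s) (A' + B') t := fun a b => by
  simpa [Matrix.add_apply] using (hA a b).fun_add (hB a b)

theorem sub {A B : ℝ → Matrix (Fin p) (Fin q) ℂ} {A' B'}
    (hA : MD A A' t) (hB : MD B B' t) :
    MD (fun s => A s - B s) (A' - B') t := fun a b => by
  simpa [Matrix.sub_apply] using (hA a b).fun_sub (hB a b)

theorem neg {A : ℝ → Matrix (Fin p) (Fin q) ℂ} {A'} (hA : MD A A' t) :
    MD (fun s => -(A s)) (-A') t := fun a b => by
  simpa [Matrix.neg_apply] using (hA a b).fun_neg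

theorem mul {A : ℝ → Matrix (Fin p) (Fin q) ℂ} {B : ℝ → Matrix (Fin q) (Fin r) ℂ} {A' B'}
    (hA : MD A A' t) (hB : MD B B' t) :
    MD (fun s => A s * B s) (A' * B t + A t * B') t := fun a b => by
  simp only [Matrix.mul_apply]
  refine HasDerivAt.congr_deriv (HasDerivAt.fun_sum (fun k _ => (hA a k).mul (hB k b))) ?_
  simp [Matrix.add_apply, Matrix.mul_apply, Finset.sum_add_distrib]

theorem congr {A B : ℝ → Matrix (Fin p) (Fin q) ℂ} {A'}
    (hA : MD A A' t) (h : ∀ s, B s = A s) : MD B A' t := by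
  have : B = A := funext h
  rw [this]; exact hA

theorem congr' {A : ℝ → Matrix (Fin p) (Fin q) ℂ} {A' A''}
    (hA : MD A A' t) (h : A'' = A') : MD A A'' t := by rw [h]; exact hA

theorem unique {A : ℝ → Matrix (Fin p) (Fin q) ℂ} {A' A''}
    (h1 : MD A A' t) (h2 : MD A A'' t) : A' = A'' := by
  ext a b; exact (h1 a b).unique (h2 a b)

end MD

variable {p q r k : ℕ} {t : ℝ}

theorem diff_det {M : ℝ → Matrix (Fin p) (Fin p) ℂ}
    (h : ∀ a b, DifferentiableAt ℝ (fun s => M s a b) t) :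
    DifferentiableAt ℝ (fun s => (M s).det) t := by
  have : (fun s => (M s).det)
      = fun s => ∑ σ : Equiv.Perm (Fin p), ((Equiv.Perm.sign σ : ℤ) : ℂ) * ∏ i, M s (σ i) i := by
    funext s; rw [Matrix.det_apply']
  rw [this]
  refine DifferentiableAt.fun_sum (fun σ _ => DifferentiableAt.const_mul ?_ _)
  exact HasDerivAt.differentiableAt
    (HasDerivAt.fun_finsetProd (fun i _ => (h (σ i) i).hasDerivAt))

theorem diff_inv_entry {M : ℝ → Matrix (Fin p) (Fin p) ℂ}
    (hu : ∀ s, IsUnit (M s)) (h : ∀ a b, DifferentiableAt ℝ (fun s => M s a b) t)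
    (a b : Fin p) :
    DifferentiableAt ℝ (fun s => (M s)⁻¹ a b) t := by
  have hf : (fun s => (M s)⁻¹ a b)
      = fun s => ((M s).det)⁻¹ * ((M s).updateRow b (Pi.single a 1)).det := by
    funext s
    rw [Matrix.inv_def, Matrix.smul_apply, Matrix.adjugate_apply, Ring.inverse_eq_inv',
      smul_eq_mul]
  rw [hf]
  have hdet : DifferentiableAt ℝ (fun s => (M s).det) t := diff_det h
  have hne : (M t).det ≠ 0 :=
    IsUnit.ne_zero ((Matrix.isUnit_iff_isUnit_det _).mp (hu t))
  refine DifferentiableAt.mul (hdet.inv hne) (diff_det fun c d => ?_)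
  by_cases hc : c = b
  · subst hc; simp only [Matrix.updateRow_self]; exact differentiableAt_const _
  · simp only [Matrix.updateRow_ne hc]; exact h c d

theorem udet {W : Matrix (Fin p) (Fin p) ℂ} (h : IsUnit W) : IsUnit W.det :=
  (Matrix.isUnit_iff_isUnit_det W).mp h

theorem mul_inv_one {W : Matrix (Fin p) (Fin p) ℂ} (h : IsUnit W) : W * W⁻¹ = 1 :=
  Matrix.mul_nonsing_inv _ (udet h)

theorem inv_mul_one {W : Matrix (Fin p) (Fin p) ℂ} (h : IsUnit W) : W⁻¹ * W = 1 :=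
  Matrix.nonsing_inv_mul _ (udet h)

theorem inv_mul_cl {W : Matrix (Fin p) (Fin p) ℂ} (h : IsUnit W)
    (B : Matrix (Fin p) (Fin q) ℂ) : W⁻¹ * (W * B) = B :=
  Matrix.nonsing_inv_mul_cancel_left _ _ (udet h)

theorem mul_inv_cl {W : Matrix (Fin p) (Fin p) ℂ} (h : IsUnit W)
    (B : Matrix (Fin p) (Fin q) ℂ) : W * (W⁻¹ * B) = B :=
  Matrix.mul_nonsing_inv_cancel_left _ _ (udet h)

theorem mul_inv_cr {W : Matrix (Fin p) (Fin p) ℂ} (h : IsUnit W)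
    (B : Matrix (Fin q) (Fin p) ℂ) : B * W * W⁻¹ = B :=
  Matrix.mul_nonsing_inv_cancel_right _ _ (udet h)

theorem inv_mul_cr {W : Matrix (Fin p) (Fin p) ℂ} (h : IsUnit W)
    (B : Matrix (Fin q) (Fin p) ℂ) : B * W⁻¹ * W = B :=
  Matrix.nonsing_inv_mul_cancel_right _ _ (udet h)

theorem mulLeftCancel {W : Matrix (Fin p) (Fin p) ℂ} (h : IsUnit W)
    {X Y : Matrix (Fin p) (Fin q) ℂ} (hXY : W * X = W * Y) : X = Y := by
  have := congrArg (fun Z => W⁻¹ * Z) hXY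
  simpa [inv_mul_cl h] using this

theorem mulRightCancel {W : Matrix (Fin p) (Fin p) ℂ} (h : IsUnit W)
    {X Y : Matrix (Fin q) (Fin p) ℂ} (hXY : X * W = Y * W) : X = Y := by
  have := congrArg (fun Z => Z * W⁻¹) hXY
  simpa [Matrix.mul_assoc, mul_inv_one h] using this

theorem MD.inv {M : ℝ → Matrix (Fin p) (Fin p) ℂ} {M'}
    (hu : ∀ s, IsUnit (M s)) (hM : MD M M' t) :
    MD (fun s => (M s)⁻¹) (-((M t)⁻¹ * M' * (M t)⁻¹)) t := by
  have hdiff : ∀ a b, DifferentiableAt ℝ (fun s => (M s)⁻¹ a b) t :=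
    diff_inv_entry hu (fun a b => (hM a b).differentiableAt)
  set B' : Matrix (Fin p) (Fin p) ℂ := Matrix.of (fun a b => deriv (fun s => (M s)⁻¹ a b) t)
    with hB'
  have hB : MD (fun s => (M s)⁻¹) B' t := fun a b => by
    simpa [hB'] using (hdiff a b).hasDerivAt
  have h1 : MD (fun s => M s * (M s)⁻¹) (M' * (M t)⁻¹ + M t * B') t := hM.mul hB
  have h2 : MD (fun s => M s * (M s)⁻¹) 0 t := by
    refine MD.congr (MD.const 1) (fun s => mul_inv_one (hu s))
  have h3 : M' * (M t)⁻¹ + M t * B' = 0 := h1.unique h2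
  have h4 : B' = -((M t)⁻¹ * M' * (M t)⁻¹) := by
    have h5 : M t * B' = -(M' * (M t)⁻¹) := by
      rw [← sub_eq_zero, sub_neg_eq_add, add_comm]; exact h3
    calc B' = (M t)⁻¹ * (M t * B') := (inv_mul_cl (hu t) B').symm
      _ = -((M t)⁻¹ * M' * (M t)⁻¹) := by rw [h5, Matrix.mul_neg, Matrix.mul_assoc]
  exact hB.congr' h4.symm

end SDChiral

open SDChiral

/-- binary Darboux transformation / self-consistent source extension data for the
semi-discrete chiral model.  Given an invertible seed solution `g₀`, matrix data
`P, Q, ω̃ (= om), γ₁, γ₂`, solutions `θ, η` of the associated linear systems and an invertible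
solution `Ω̃ (= Om)` of the corresponding Sylvester-type equations, the transformed quantities
`g = (I − θ Ω̃_{,2}⁻¹ η) g₀`, `q̃ (= qq) = θ Ω̃_{,2}⁻¹`, `r̃ (= rr) = Ω̃⁻¹ η` satisfy the
source-extended semi-discrete chiral model equations (1)–(5). -/
theorem stmt_5 (m n : ℕ)
    (g₀ : ℝ → ℤ → ℤ → Matrix (Fin m) (Fin m) ℂ)
    (hg₀inv : ∀ t j₁ j₂, IsUnit (g₀ t j₁ j₂))
    (hg₀diff : ∀ t j₁ j₂ (a b : Fin m), DifferentiableAt ℝ (fun s => g₀ s j₁ j₂ a b) t)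
    (hseed : ∀ t j₁ j₂ (a b : Fin m),
      HasDerivAt (fun s => (g₀ s j₁ j₂ * (g₀ s (j₁ + 1) j₂)⁻¹) a b)
        ((g₀ t j₁ j₂ * (g₀ t j₁ (j₂ + 1))⁻¹
          - g₀ t (j₁ + 1) (j₂ - 1) * (g₀ t (j₁ + 1) j₂)⁻¹) a b) t)
    (P Q : ℝ → ℤ → ℤ → Matrix (Fin n) (Fin n) ℂ)
    (hPt : ∀ t j₁ j₂ (a b : Fin n), HasDerivAt (fun s => P s j₁ j₂ a b) 0 t)
    (hP2 : ∀ t j₁ j₂, P t j₁ (j₂ + 1) = P t j₁ j₂)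
    (hQt : ∀ t j₁ j₂ (a b : Fin n), HasDerivAt (fun s => Q s j₁ j₂ a b) 0 t)
    (hQ2 : ∀ t j₁ j₂, Q t j₁ (j₂ + 1) = Q t j₁ j₂)
    (om omt : ℝ → ℤ → ℤ → Matrix (Fin n) (Fin n) ℂ)
    (homt : ∀ t j₁ j₂ (a b : Fin n), HasDerivAt (fun s => om s j₁ j₂ a b) (omt t j₁ j₂ a b) t)
    (hom2 : ∀ t j₁ j₂, om t j₁ (j₂ + 1) = om t j₁ j₂)
    (γ₁ γ₂ : ℝ → ℤ → ℤ → Matrix (Fin n) (Fin n) ℂ)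
    (hγ₁ : ∀ t j₁ j₂, γ₁ t j₁ j₂ = om t j₁ j₂ * P t j₁ j₂ - Q t j₁ j₂ * om t (j₁ + 1) j₂)
    (hγ₂ : ∀ t j₁ j₂, γ₂ t j₁ j₂ = -omt t j₁ j₂)
    (θ θt : ℝ → ℤ → ℤ → Matrix (Fin m) (Fin n) ℂ)
    (hθt : ∀ t j₁ j₂ (a : Fin m) (b : Fin n),
      HasDerivAt (fun s => θ s j₁ j₂ a b) (θt t j₁ j₂ a b) t)
    (hθ1 : ∀ t j₁ j₂, θ t j₁ (j₂ - 1)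
      = -(θ t (j₁ - 1) j₂ * P t (j₁ - 1) j₂) - g₀ t (j₁ - 1) j₂ * (g₀ t j₁ j₂)⁻¹ * θ t j₁ j₂)
    (hθ2 : ∀ t j₁ j₂, θt t j₁ j₂ = g₀ t j₁ j₂ * (g₀ t j₁ (j₂ + 1))⁻¹ * θ t j₁ (j₂ + 1))
    (η ηt : ℝ → ℤ → ℤ → Matrix (Fin n) (Fin m) ℂ)
    (hηt : ∀ t j₁ j₂ (a : Fin n) (b : Fin m),
      HasDerivAt (fun s => η s j₁ j₂ a b) (ηt t j₁ j₂ a b) t)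
    (hη1 : ∀ t j₁ j₂, η t j₁ (j₂ + 1)
      = -(Q t j₁ j₂ * η t (j₁ + 1) j₂) - η t j₁ j₂ * (g₀ t j₁ j₂ * (g₀ t (j₁ + 1) j₂)⁻¹))
    (hη2 : ∀ t j₁ j₂, ηt t j₁ j₂ = -((η t j₁ (j₂ - 1) * g₀ t j₁ (j₂ - 1)) * (g₀ t j₁ j₂)⁻¹))
    (Om Omt : ℝ → ℤ → ℤ → Matrix (Fin n) (Fin n) ℂ)
    (hOminv : ∀ t j₁ j₂, IsUnit (Om t j₁ j₂))
    (hOmt : ∀ t j₁ j₂ (a b : Fin n), HasDerivAt (fun s => Om s j₁ j₂ a b) (Omt t j₁ j₂ a b) t)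
    (hOm1 : ∀ t j₁ j₂, Om t j₁ (j₂ + 1) - Om t j₁ j₂ = η t j₁ j₂ * θ t j₁ j₂)
    (hOm2 : ∀ t j₁ j₂, Om t (j₁ + 1) (j₂ - 1) - (1 + Q t j₁ j₂) * Om t (j₁ + 1) j₂
        + Om t j₁ j₂ * P t j₁ j₂
        + (η t (j₁ + 1) (j₂ - 1) - η t j₁ j₂) * θ t (j₁ + 1) (j₂ - 1) - γ₁ t j₁ j₂ = 0)
    (hOm3 : ∀ t j₁ j₂, Omt t j₁ j₂ = -(ηt t j₁ j₂ * θ t j₁ j₂) - γ₂ t j₁ j₂)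
    (g : ℝ → ℤ → ℤ → Matrix (Fin m) (Fin m) ℂ)
    (qq : ℝ → ℤ → ℤ → Matrix (Fin m) (Fin n) ℂ)
    (rr : ℝ → ℤ → ℤ → Matrix (Fin n) (Fin m) ℂ)
    (hg : ∀ t j₁ j₂, g t j₁ j₂
      = (1 - θ t j₁ j₂ * (Om t j₁ (j₂ + 1))⁻¹ * η t j₁ j₂) * g₀ t j₁ j₂)
    (hqq : ∀ t j₁ j₂, qq t j₁ j₂ = θ t j₁ j₂ * (Om t j₁ (j₂ + 1))⁻¹)
    (hrr : ∀ t j₁ j₂, rr t j₁ j₂ = (Om t j₁ j₂)⁻¹ * η t j₁ j₂)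
    (hginv : ∀ t j₁ j₂, IsUnit (g t j₁ j₂)) :
    -- (1)  (g g_{,1}⁻¹)_t + (g g_{,2}⁻¹)_{,1,-2} − g g_{,2}⁻¹
    --        = (q̃_{,-2} γ₂ r̃)_{,2} − (q̃_{,-2} γ₂ r̃)_{,1} − (q̃ γ₁ r̃_{,1})_t
    (∀ t j₁ j₂ (a b : Fin m),
      HasDerivAt
        (fun s => (g s j₁ j₂ * (g s (j₁ + 1) j₂)⁻¹
            + qq s j₁ j₂ * γ₁ s j₁ j₂ * rr s (j₁ + 1) j₂) a b)
        ((g t j₁ j₂ * (g t j₁ (j₂ + 1))⁻¹ - g t (j₁ + 1) (j₂ - 1) * (g t (j₁ + 1) j₂)⁻¹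
          + qq t j₁ j₂ * γ₂ t j₁ (j₂ + 1) * rr t j₁ (j₂ + 1)
          - qq t (j₁ + 1) (j₂ - 1) * γ₂ t (j₁ + 1) j₂ * rr t (j₁ + 1) j₂) a b) t) ∧
    -- (2)  q̃_{,1,-2} = −q̃ Q − g g_{,1}⁻¹ q̃_{,1} − q̃ γ₁ (Ω̃_{,2}⁻¹ + r̃ q̃)_{,1}
    (∀ t j₁ j₂, qq t (j₁ + 1) (j₂ - 1)
      = -(qq t j₁ j₂ * Q t j₁ j₂) - g t j₁ j₂ * (g t (j₁ + 1) j₂)⁻¹ * qq t (j₁ + 1) j₂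
        - qq t j₁ j₂ * γ₁ t j₁ j₂
          * ((Om t (j₁ + 1) (j₂ + 1))⁻¹ + rr t (j₁ + 1) j₂ * qq t (j₁ + 1) j₂)) ∧
    -- (3)  q̃_t = g g_{,2}⁻¹ q̃_{,2} + q̃ γ₂ (Ω̃_{,2}⁻¹ + r̃ q̃)_{,2}
    (∀ t j₁ j₂ (a : Fin m) (b : Fin n),
      HasDerivAt (fun s => qq s j₁ j₂ a b)
        ((g t j₁ j₂ * (g t j₁ (j₂ + 1))⁻¹ * qq t j₁ (j₂ + 1)
          + qq t j₁ j₂ * γ₂ t j₁ j₂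
            * ((Om t j₁ (j₂ + 1 + 1))⁻¹ + rr t j₁ (j₂ + 1) * qq t j₁ (j₂ + 1))) a b) t) ∧
    -- (4)  r̃_{,2} = −P r̃_{,1} − r̃ g g_{,1}⁻¹ + (Ω̃⁻¹ − r̃ q̃) γ₁ r̃_{,1}
    (∀ t j₁ j₂, rr t j₁ (j₂ + 1)
      = -(P t j₁ j₂ * rr t (j₁ + 1) j₂) - rr t j₁ j₂ * (g t j₁ j₂ * (g t (j₁ + 1) j₂)⁻¹)
        + ((Om t j₁ j₂)⁻¹ - rr t j₁ j₂ * qq t j₁ j₂) * γ₁ t j₁ j₂ * rr t (j₁ + 1) j₂) ∧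
    -- (5)  r̃_t = −(r̃ g)_{,-2} g⁻¹ + (Ω̃⁻¹ − r̃ q̃)_{,-2} γ₂ r̃
    (∀ t j₁ j₂ (a : Fin n) (b : Fin m),
      HasDerivAt (fun s => rr s j₁ j₂ a b)
        ((-((rr t j₁ (j₂ - 1) * g t j₁ (j₂ - 1)) * (g t j₁ j₂)⁻¹)
          + ((Om t j₁ (j₂ - 1))⁻¹ - rr t j₁ (j₂ - 1) * qq t j₁ (j₂ - 1))
            * γ₂ t j₁ j₂ * rr t j₁ j₂) a b) t) := by
  -- ===== shared algebraic facts =====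
  have hOm1' : ∀ t j₁ j₂, Om t j₁ (j₂ + 1) = Om t j₁ j₂ + η t j₁ j₂ * θ t j₁ j₂ := by
    intro t j₁ j₂; rw [← sub_eq_iff_eq_add']; exact hOm1 t j₁ j₂
  have homt2 : ∀ t j₁ j₂, omt t j₁ (j₂ + 1) = omt t j₁ j₂ := by
    intro t j₁ j₂; ext a b
    have h2 : HasDerivAt (fun s => om s j₁ (j₂ + 1) a b) (omt t j₁ j₂ a b) t := by
      have he : (fun s => om s j₁ (j₂ + 1) a b) = (fun s => om s j₁ j₂ a b) := by
        funext s; rw [hom2]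
      rw [he]; exact homt t j₁ j₂ a b
    exact (homt t j₁ (j₂ + 1) a b).unique h2
  have hγ₂2 : ∀ t j₁ j₂, γ₂ t j₁ (j₂ + 1) = γ₂ t j₁ j₂ := by
    intro t j₁ j₂; rw [hγ₂, hγ₂, homt2]
  have hγ₁2 : ∀ t j₁ j₂, γ₁ t j₁ (j₂ + 1) = γ₁ t j₁ j₂ := by
    intro t j₁ j₂; rw [hγ₁, hγ₁, hom2, hom2, hP2, hQ2]
  have keyB : ∀ t j₁ j₂,
      (Om t j₁ j₂)⁻¹ - rr t j₁ j₂ * qq t j₁ j₂ = (Om t j₁ (j₂ + 1))⁻¹ := by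
    intro t j₁ j₂
    apply mulRightCancel (hOminv t j₁ (j₂ + 1))
    rw [Matrix.sub_mul, hrr t j₁ j₂, hqq t j₁ j₂, inv_mul_one (hOminv t j₁ (j₂ + 1)),
      Matrix.mul_assoc ((Om t j₁ j₂)⁻¹ * η t j₁ j₂),
      inv_mul_cr (hOminv t j₁ (j₂ + 1)), hOm1' t j₁ j₂]
    simp only [Matrix.mul_add, inv_mul_one (hOminv t j₁ j₂), Matrix.mul_assoc]
    abel
  have keyA : ∀ t j₁ j₂,
      (Om t j₁ (j₂ + 1))⁻¹ + rr t j₁ j₂ * qq t j₁ j₂ = (Om t j₁ j₂)⁻¹ := by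
    intro t j₁ j₂; rw [← keyB t j₁ j₂]; abel
  have rra : ∀ t j₁ j₂,
      rr t j₁ j₂ * (1 - qq t j₁ j₂ * η t j₁ j₂) = (Om t j₁ (j₂ + 1))⁻¹ * η t j₁ j₂ := by
    intro t j₁ j₂
    calc rr t j₁ j₂ * (1 - qq t j₁ j₂ * η t j₁ j₂)
        = ((Om t j₁ j₂)⁻¹ - rr t j₁ j₂ * qq t j₁ j₂) * η t j₁ j₂ := by
          rw [hrr t j₁ j₂]
          simp only [Matrix.mul_sub, Matrix.sub_mul, Matrix.mul_one, Matrix.mul_assoc]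
      _ = (Om t j₁ (j₂ + 1))⁻¹ * η t j₁ j₂ := by rw [keyB t j₁ j₂]
  have aθ : ∀ t j₁ j₂,
      (1 - qq t j₁ j₂ * η t j₁ j₂) * θ t j₁ j₂ = qq t j₁ j₂ * Om t j₁ j₂ := by
    intro t j₁ j₂
    rw [hqq t j₁ j₂]
    have h : η t j₁ j₂ * θ t j₁ j₂ = Om t j₁ (j₂ + 1) - Om t j₁ j₂ := (hOm1 t j₁ j₂).symm
    calc (1 - θ t j₁ j₂ * (Om t j₁ (j₂ + 1))⁻¹ * η t j₁ j₂) * θ t j₁ j₂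
        = θ t j₁ j₂ - θ t j₁ j₂ * ((Om t j₁ (j₂ + 1))⁻¹ * (η t j₁ j₂ * θ t j₁ j₂)) := by
          simp only [Matrix.sub_mul, Matrix.one_mul, Matrix.mul_assoc]
      _ = θ t j₁ j₂ - θ t j₁ j₂ * ((Om t j₁ (j₂ + 1))⁻¹ * Om t j₁ (j₂ + 1)
            - (Om t j₁ (j₂ + 1))⁻¹ * Om t j₁ j₂) := by rw [h, Matrix.mul_sub]
      _ = θ t j₁ j₂ * (Om t j₁ (j₂ + 1))⁻¹ * Om t j₁ j₂ := by
          rw [inv_mul_one (hOminv t j₁ (j₂ + 1))]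
          simp only [Matrix.mul_sub, Matrix.mul_one, Matrix.mul_assoc]
          abel
  have qqetatheta : ∀ t j₁ j₂,
      qq t j₁ j₂ * (η t j₁ j₂ * θ t j₁ j₂) = θ t j₁ j₂ - qq t j₁ j₂ * Om t j₁ j₂ := by
    intro t j₁ j₂
    have h := aθ t j₁ j₂
    simp only [Matrix.sub_mul, Matrix.one_mul, Matrix.mul_assoc] at h
    rw [← h]; abel
  have ainv : ∀ t j₁ j₂,
      (1 - qq t j₁ j₂ * η t j₁ j₂) * (1 + θ t j₁ j₂ * rr t j₁ j₂) = 1 := by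
    intro t j₁ j₂
    have h2 : (1 - qq t j₁ j₂ * η t j₁ j₂) * (θ t j₁ j₂ * rr t j₁ j₂)
        = qq t j₁ j₂ * η t j₁ j₂ := by
      rw [← Matrix.mul_assoc, aθ t j₁ j₂, Matrix.mul_assoc, hrr t j₁ j₂,
        mul_inv_cl (hOminv t j₁ j₂)]
    rw [Matrix.mul_add, Matrix.mul_one, h2]
    abel
  have ginv' : ∀ t j₁ j₂,
      (g t j₁ j₂)⁻¹ = (g₀ t j₁ j₂)⁻¹ * (1 + θ t j₁ j₂ * rr t j₁ j₂) := by
    intro t j₁ j₂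
    rw [hg t j₁ j₂, Matrix.mul_inv_rev]
    have he : (1 : Matrix (Fin m) (Fin m) ℂ) - θ t j₁ j₂ * (Om t j₁ (j₂ + 1))⁻¹ * η t j₁ j₂
        = 1 - qq t j₁ j₂ * η t j₁ j₂ := by rw [hqq t j₁ j₂]
    rw [he, Matrix.inv_eq_right_inv (ainv t j₁ j₂)]
  have keyD : ∀ t j₁ j₂,
      (1 + θ t j₁ j₂ * rr t j₁ j₂) * (θ t j₁ j₂ * (Om t j₁ (j₂ + 1))⁻¹)
        = θ t j₁ j₂ * (Om t j₁ j₂)⁻¹ := by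
    intro t j₁ j₂
    have he : (1 + θ t j₁ j₂ * rr t j₁ j₂) * (θ t j₁ j₂ * (Om t j₁ (j₂ + 1))⁻¹)
        = θ t j₁ j₂ * ((Om t j₁ (j₂ + 1))⁻¹ + rr t j₁ j₂ * qq t j₁ j₂) := by
      rw [hqq t j₁ j₂]
      simp only [Matrix.mul_add, Matrix.add_mul, Matrix.one_mul, Matrix.mul_assoc]
    rw [he, keyA t j₁ j₂]
  have star2 : ∀ t j₁ j₂,
      Om t j₁ j₂ * P t j₁ j₂
        = Q t j₁ j₂ * Om t (j₁ + 1) j₂ + η t j₁ j₂ * θ t (j₁ + 1) (j₂ - 1)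
          + γ₁ t j₁ j₂ := by
    intro t j₁ j₂
    have h := hOm2 t j₁ j₂
    have h1 : Om t (j₁ + 1) j₂
        = Om t (j₁ + 1) (j₂ - 1) + η t (j₁ + 1) (j₂ - 1) * θ t (j₁ + 1) (j₂ - 1) := by
      have := hOm1' t (j₁ + 1) (j₂ - 1); rw [sub_add_cancel] at this; exact this
    rw [← sub_eq_zero]
    have key : Om t j₁ j₂ * P t j₁ j₂
        - (Q t j₁ j₂ * Om t (j₁ + 1) j₂ + η t j₁ j₂ * θ t (j₁ + 1) (j₂ - 1) + γ₁ t j₁ j₂)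
        = Om t (j₁ + 1) (j₂ - 1) - (1 + Q t j₁ j₂) * Om t (j₁ + 1) j₂
          + Om t j₁ j₂ * P t j₁ j₂
          + (η t (j₁ + 1) (j₂ - 1) - η t j₁ j₂) * θ t (j₁ + 1) (j₂ - 1) - γ₁ t j₁ j₂ := by
      rw [h1]
      simp only [Matrix.add_mul, Matrix.sub_mul, Matrix.mul_add, Matrix.mul_sub,
        Matrix.one_mul, Matrix.mul_one, Matrix.mul_assoc]
      abel
    rw [key]; exact h
  have star1 : ∀ t j₁ j₂,
      Om t j₁ (j₂ + 1) * P t j₁ j₂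
        = Q t j₁ j₂ * Om t (j₁ + 1) j₂
          + (η t j₁ (j₂ + 1) + Q t j₁ j₂ * η t (j₁ + 1) j₂) * θ t (j₁ + 1) j₂
          + γ₁ t j₁ j₂ := by
    intro t j₁ j₂
    have h := hOm2 t j₁ (j₂ + 1)
    simp only [add_sub_cancel_right] at h
    rw [hQ2, hP2, hγ₁2] at h
    have h1 : Om t (j₁ + 1) (j₂ + 1)
        = Om t (j₁ + 1) j₂ + η t (j₁ + 1) j₂ * θ t (j₁ + 1) j₂ := hOm1' t (j₁ + 1) j₂
    rw [← sub_eq_zero]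
    have key : Om t j₁ (j₂ + 1) * P t j₁ j₂
        - (Q t j₁ j₂ * Om t (j₁ + 1) j₂
          + (η t j₁ (j₂ + 1) + Q t j₁ j₂ * η t (j₁ + 1) j₂) * θ t (j₁ + 1) j₂
          + γ₁ t j₁ j₂)
        = Om t (j₁ + 1) j₂ - (1 + Q t j₁ j₂) * Om t (j₁ + 1) (j₂ + 1)
          + Om t j₁ (j₂ + 1) * P t j₁ j₂
          + (η t (j₁ + 1) j₂ - η t j₁ (j₂ + 1)) * θ t (j₁ + 1) j₂ - γ₁ t j₁ j₂ := by
      rw [h1]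
      simp only [Matrix.add_mul, Matrix.sub_mul, Matrix.mul_add, Matrix.mul_sub,
        Matrix.one_mul, Matrix.mul_one, Matrix.mul_assoc]
      abel
    rw [key]; exact h
  -- core identity for (4)
  have P4core : ∀ t j₁ j₂,
      rr t j₁ (j₂ + 1)
        = -(P t j₁ j₂ * rr t (j₁ + 1) j₂)
          - (Om t j₁ (j₂ + 1))⁻¹ * (η t j₁ j₂ * (g₀ t j₁ j₂ * ((g₀ t (j₁ + 1) j₂)⁻¹
              * (1 + θ t (j₁ + 1) j₂ * rr t (j₁ + 1) j₂))))
          + (Om t j₁ (j₂ + 1))⁻¹ * (γ₁ t j₁ j₂ * rr t (j₁ + 1) j₂) := by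
    intro t j₁ j₂
    have F4 : P t j₁ j₂ * rr t (j₁ + 1) j₂
        = (Om t j₁ (j₂ + 1))⁻¹ * (Q t j₁ j₂ * η t (j₁ + 1) j₂)
          + (Om t j₁ (j₂ + 1))⁻¹ * ((η t j₁ (j₂ + 1) + Q t j₁ j₂ * η t (j₁ + 1) j₂)
              * (θ t (j₁ + 1) j₂ * rr t (j₁ + 1) j₂))
          + (Om t j₁ (j₂ + 1))⁻¹ * (γ₁ t j₁ j₂ * rr t (j₁ + 1) j₂) := by
      apply mulLeftCancel (hOminv t j₁ (j₂ + 1))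
      rw [← Matrix.mul_assoc, star1 t j₁ j₂]
      rw [Matrix.mul_add, Matrix.mul_add, mul_inv_cl (hOminv t j₁ (j₂ + 1)),
        mul_inv_cl (hOminv t j₁ (j₂ + 1)), mul_inv_cl (hOminv t j₁ (j₂ + 1))]
      rw [hrr t (j₁ + 1) j₂]
      simp only [Matrix.add_mul, Matrix.mul_assoc, mul_inv_cl (hOminv t (j₁ + 1) j₂)]
    have h5 : η t j₁ j₂ * (g₀ t j₁ j₂ * (g₀ t (j₁ + 1) j₂)⁻¹)
        = -(η t j₁ (j₂ + 1)) - Q t j₁ j₂ * η t (j₁ + 1) j₂ := by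
      rw [hη1 t j₁ j₂]; abel
    have hmid : η t j₁ j₂ * (g₀ t j₁ j₂ * ((g₀ t (j₁ + 1) j₂)⁻¹
          * (1 + θ t (j₁ + 1) j₂ * rr t (j₁ + 1) j₂)))
        = (-(η t j₁ (j₂ + 1)) - Q t j₁ j₂ * η t (j₁ + 1) j₂)
            * (1 + θ t (j₁ + 1) j₂ * rr t (j₁ + 1) j₂) := by
      rw [← h5]; simp only [Matrix.mul_assoc]
    rw [hrr t j₁ (j₂ + 1), hmid, F4]
    simp only [sub_eq_add_neg, Matrix.mul_add, Matrix.add_mul, Matrix.mul_neg,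
      Matrix.neg_mul, neg_neg, Matrix.mul_one, Matrix.one_mul, Matrix.mul_assoc]
    abel
  -- core identity for (2)
  have P2core : ∀ t j₁ j₂,
      qq t (j₁ + 1) (j₂ - 1)
        = -(qq t j₁ j₂ * Q t j₁ j₂)
          - (1 - qq t j₁ j₂ * η t j₁ j₂) * (g₀ t j₁ j₂ * ((g₀ t (j₁ + 1) j₂)⁻¹
              * (θ t (j₁ + 1) j₂ * (Om t (j₁ + 1) j₂)⁻¹)))
          - qq t j₁ j₂ * (γ₁ t j₁ j₂ * (Om t (j₁ + 1) j₂)⁻¹) := by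
    intro t j₁ j₂
    have hqq1m : qq t (j₁ + 1) (j₂ - 1) = θ t (j₁ + 1) (j₂ - 1) * (Om t (j₁ + 1) j₂)⁻¹ := by
      have h := hqq t (j₁ + 1) (j₂ - 1); rw [sub_add_cancel] at h; exact h
    have hθc : g₀ t j₁ j₂ * ((g₀ t (j₁ + 1) j₂)⁻¹ * θ t (j₁ + 1) j₂)
        = -(θ t (j₁ + 1) (j₂ - 1)) - θ t j₁ j₂ * P t j₁ j₂ := by
      have h := hθ1 t (j₁ + 1) j₂
      simp only [add_sub_cancel_right] at h
      rw [← Matrix.mul_assoc, h]; abel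
    have F2a : qq t j₁ j₂ * (η t j₁ j₂ * (θ t j₁ j₂ * (P t j₁ j₂ * (Om t (j₁ + 1) j₂)⁻¹)))
        = θ t j₁ j₂ * (P t j₁ j₂ * (Om t (j₁ + 1) j₂)⁻¹)
          - qq t j₁ j₂ * (Om t j₁ j₂ * (P t j₁ j₂ * (Om t (j₁ + 1) j₂)⁻¹)) := by
      have h := qqetatheta t j₁ j₂
      calc qq t j₁ j₂ * (η t j₁ j₂ * (θ t j₁ j₂ * (P t j₁ j₂ * (Om t (j₁ + 1) j₂)⁻¹)))
          = (qq t j₁ j₂ * (η t j₁ j₂ * θ t j₁ j₂)) * (P t j₁ j₂ * (Om t (j₁ + 1) j₂)⁻¹) := by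
            simp only [Matrix.mul_assoc]
        _ = (θ t j₁ j₂ - qq t j₁ j₂ * Om t j₁ j₂) * (P t j₁ j₂ * (Om t (j₁ + 1) j₂)⁻¹) := by
            rw [h]
        _ = _ := by simp only [Matrix.sub_mul, Matrix.mul_assoc]
    have F2b : Om t j₁ j₂ * (P t j₁ j₂ * (Om t (j₁ + 1) j₂)⁻¹)
        = Q t j₁ j₂ + η t j₁ j₂ * (θ t (j₁ + 1) (j₂ - 1) * (Om t (j₁ + 1) j₂)⁻¹)
          + γ₁ t j₁ j₂ * (Om t (j₁ + 1) j₂)⁻¹ := by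
      rw [← Matrix.mul_assoc, star2 t j₁ j₂]
      simp only [Matrix.add_mul, Matrix.mul_assoc, mul_inv_one (hOminv t (j₁ + 1) j₂),
        Matrix.mul_one]
    rw [hqq1m]
    have hsub : (1 - qq t j₁ j₂ * η t j₁ j₂) * (g₀ t j₁ j₂ * ((g₀ t (j₁ + 1) j₂)⁻¹
        * (θ t (j₁ + 1) j₂ * (Om t (j₁ + 1) j₂)⁻¹)))
        = (1 - qq t j₁ j₂ * η t j₁ j₂)
            * ((-(θ t (j₁ + 1) (j₂ - 1)) - θ t j₁ j₂ * P t j₁ j₂) * (Om t (j₁ + 1) j₂)⁻¹) := by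
      rw [← hθc]; simp only [Matrix.mul_assoc]
    rw [hsub]
    simp only [sub_eq_add_neg, Matrix.mul_add, Matrix.add_mul, Matrix.mul_neg,
      Matrix.neg_mul, neg_neg, Matrix.mul_one, Matrix.one_mul, Matrix.mul_assoc]
    rw [F2a, F2b]
    simp only [sub_eq_add_neg, Matrix.mul_add, Matrix.add_mul, Matrix.mul_neg,
      Matrix.neg_mul, neg_neg, Matrix.mul_one, Matrix.one_mul, Matrix.mul_assoc]
    abel
  refine ⟨?_, ?_, ?_, ?_, ?_⟩
  · -- (1)
    intro t j₁ j₂ a b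
    -- cancellation helpers at time t
    have cg : ∀ (i₁ i₂ : ℤ) (k : ℕ) (B : Matrix (Fin m) (Fin k) ℂ),
        (g₀ t i₁ i₂)⁻¹ * (g₀ t i₁ i₂ * B) = B := fun i₁ i₂ k B => inv_mul_cl (hg₀inv t i₁ i₂) B
    have cg' : ∀ (i₁ i₂ : ℤ) (k : ℕ) (B : Matrix (Fin m) (Fin k) ℂ),
        g₀ t i₁ i₂ * ((g₀ t i₁ i₂)⁻¹ * B) = B := fun i₁ i₂ k B => mul_inv_cl (hg₀inv t i₁ i₂) B
    have cO : ∀ (i₁ i₂ : ℤ) (k : ℕ) (B : Matrix (Fin n) (Fin k) ℂ),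
        (Om t i₁ i₂)⁻¹ * (Om t i₁ i₂ * B) = B := fun i₁ i₂ k B => inv_mul_cl (hOminv t i₁ i₂) B
    have cO' : ∀ (i₁ i₂ : ℤ) (k : ℕ) (B : Matrix (Fin n) (Fin k) ℂ),
        Om t i₁ i₂ * ((Om t i₁ i₂)⁻¹ * B) = B := fun i₁ i₂ k B => mul_inv_cl (hOminv t i₁ i₂) B
    -- derivative of qq in atomic form
    have mdqqA : MD (fun s => qq s j₁ j₂)
        ((1 - qq t j₁ j₂ * η t j₁ j₂) * (g₀ t j₁ j₂ * ((g₀ t j₁ (j₂ + 1))⁻¹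
            * (θ t j₁ (j₂ + 1) * (Om t j₁ (j₂ + 1))⁻¹)))
          + qq t j₁ j₂ * (γ₂ t j₁ j₂ * (Om t j₁ (j₂ + 1))⁻¹)) t := by
      have mdOminv : MD (fun s => (Om s j₁ (j₂ + 1))⁻¹)
          (-((Om t j₁ (j₂ + 1))⁻¹ * Omt t j₁ (j₂ + 1) * (Om t j₁ (j₂ + 1))⁻¹)) t :=
        MD.inv (fun s => hOminv s j₁ (j₂ + 1)) (fun a b => hOmt t j₁ (j₂ + 1) a b)
      have mdθ : MD (fun s => θ s j₁ j₂) (θt t j₁ j₂) t := fun a b => hθt t j₁ j₂ a b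
      refine ((mdθ.mul mdOminv).congr (fun s => hqq s j₁ j₂)).congr' ?_
      have hOmt01 : Omt t j₁ (j₂ + 1)
          = η t j₁ j₂ * (g₀ t j₁ j₂ * ((g₀ t j₁ (j₂ + 1))⁻¹ * θ t j₁ (j₂ + 1)))
            - γ₂ t j₁ j₂ := by
        rw [hOm3 t j₁ (j₂ + 1), hη2 t j₁ (j₂ + 1)]
        simp only [add_sub_cancel_right]
        rw [hγ₂2 t j₁ j₂]
        simp only [Matrix.neg_mul, neg_neg, Matrix.mul_assoc]
      rw [hOmt01, hθ2 t j₁ j₂, hqq t j₁ j₂]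
      simp only [sub_eq_add_neg, Matrix.mul_add, Matrix.add_mul, Matrix.mul_neg,
        Matrix.neg_mul, neg_neg, Matrix.mul_one, Matrix.one_mul, Matrix.mul_assoc]
      abel
    -- derivative of rr at (j₁+1, j₂) in atomic form
    have mdrrA : MD (fun s => rr s (j₁ + 1) j₂)
        (-((Om t (j₁ + 1) j₂)⁻¹ * (η t (j₁ + 1) (j₂ - 1) * (g₀ t (j₁ + 1) (j₂ - 1)
            * ((g₀ t (j₁ + 1) j₂)⁻¹ * (1 + θ t (j₁ + 1) j₂ * rr t (j₁ + 1) j₂)))))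
          + (Om t (j₁ + 1) j₂)⁻¹ * (γ₂ t (j₁ + 1) j₂ * rr t (j₁ + 1) j₂)) t := by
      have mdOminv : MD (fun s => (Om s (j₁ + 1) j₂)⁻¹)
          (-((Om t (j₁ + 1) j₂)⁻¹ * Omt t (j₁ + 1) j₂ * (Om t (j₁ + 1) j₂)⁻¹)) t :=
        MD.inv (fun s => hOminv s (j₁ + 1) j₂) (fun a b => hOmt t (j₁ + 1) j₂ a b)
      have mdη : MD (fun s => η s (j₁ + 1) j₂) (ηt t (j₁ + 1) j₂) t :=
        fun a b => hηt t (j₁ + 1) j₂ a b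
      refine ((mdOminv.mul mdη).congr (fun s => hrr s (j₁ + 1) j₂)).congr' ?_
      have hOmt10 : Omt t (j₁ + 1) j₂
          = η t (j₁ + 1) (j₂ - 1) * g₀ t (j₁ + 1) (j₂ - 1) * (g₀ t (j₁ + 1) j₂)⁻¹
              * θ t (j₁ + 1) j₂ - γ₂ t (j₁ + 1) j₂ := by
        rw [hOm3 t (j₁ + 1) j₂, hη2 t (j₁ + 1) j₂]
        simp only [Matrix.neg_mul, neg_neg]
      rw [hOmt10, hη2 t (j₁ + 1) j₂, hrr t (j₁ + 1) j₂]
      simp only [sub_eq_add_neg, Matrix.mul_add, Matrix.add_mul, Matrix.mul_neg,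
        Matrix.neg_mul, neg_neg, Matrix.mul_one, Matrix.one_mul, Matrix.mul_assoc]
      abel
    -- derivative of γ₁
    have mdγ : MD (fun s => γ₁ s j₁ j₂)
        (-(γ₂ t j₁ j₂ * P t j₁ j₂) + Q t j₁ j₂ * γ₂ t (j₁ + 1) j₂) t := by
      have mdom : MD (fun s => om s j₁ j₂) (omt t j₁ j₂) t := fun a b => homt t j₁ j₂ a b
      have mdom1 : MD (fun s => om s (j₁ + 1) j₂) (omt t (j₁ + 1) j₂) t :=
        fun a b => homt t (j₁ + 1) j₂ a b
      have mdP : MD (fun s => P s j₁ j₂) 0 t := fun a b => hPt t j₁ j₂ a b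
      have mdQ : MD (fun s => Q s j₁ j₂) 0 t := fun a b => hQt t j₁ j₂ a b
      refine (((mdom.mul mdP).sub (mdQ.mul mdom1)).congr (fun s => hγ₁ s j₁ j₂)).congr' ?_
      rw [hγ₂ t j₁ j₂, hγ₂ t (j₁ + 1) j₂]
      simp only [Matrix.mul_zero, Matrix.zero_mul, Matrix.mul_neg, Matrix.neg_mul, neg_neg,
        add_zero, zero_add]
      abel
    have mdη : MD (fun s => η s j₁ j₂) (ηt t j₁ j₂) t := fun a b => hηt t j₁ j₂ a b
    have mdθ1 : MD (fun s => θ s (j₁ + 1) j₂) (θt t (j₁ + 1) j₂) t :=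
      fun a b => hθt t (j₁ + 1) j₂ a b
    have mdU : MD (fun s => g₀ s j₁ j₂ * (g₀ s (j₁ + 1) j₂)⁻¹)
        (g₀ t j₁ j₂ * (g₀ t j₁ (j₂ + 1))⁻¹
          - g₀ t (j₁ + 1) (j₂ - 1) * (g₀ t (j₁ + 1) j₂)⁻¹) t :=
      fun a b => hseed t j₁ j₂ a b
    have mdA := (MD.const (t := t) (1 : Matrix (Fin m) (Fin m) ℂ)).sub (mdqqA.mul mdη)
    have mdB := (MD.const (t := t) (1 : Matrix (Fin m) (Fin m) ℂ)).add (mdθ1.mul mdrrA)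
    have mdF := ((mdA.mul mdU).mul mdB).add ((mdqqA.mul mdγ).mul mdrrA)
    have mdF2 := mdF.congr (B := fun s => g s j₁ j₂ * (g s (j₁ + 1) j₂)⁻¹
        + qq s j₁ j₂ * γ₁ s j₁ j₂ * rr s (j₁ + 1) j₂) (fun s => by
      beta_reduce
      rw [hg s j₁ j₂, ginv' s (j₁ + 1) j₂, ← hqq s j₁ j₂]
      simp only [Matrix.mul_assoc])
    refine (mdF2.congr' ?_) a b
    beta_reduce
    -- now the big pointwise algebra
    have hgg2 : g t j₁ j₂ * (g t j₁ (j₂ + 1))⁻¹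
        = (1 - qq t j₁ j₂ * η t j₁ j₂) * (g₀ t j₁ j₂ * ((g₀ t j₁ (j₂ + 1))⁻¹
            * (1 + θ t j₁ (j₂ + 1) * rr t j₁ (j₂ + 1)))) := by
      rw [hg t j₁ j₂, ginv' t j₁ (j₂ + 1), ← hqq t j₁ j₂]
      simp only [Matrix.mul_assoc]
    have hgg1m : g t (j₁ + 1) (j₂ - 1) * (g t (j₁ + 1) j₂)⁻¹
        = (1 - qq t (j₁ + 1) (j₂ - 1) * η t (j₁ + 1) (j₂ - 1)) * (g₀ t (j₁ + 1) (j₂ - 1)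
            * ((g₀ t (j₁ + 1) j₂)⁻¹ * (1 + θ t (j₁ + 1) j₂ * rr t (j₁ + 1) j₂))) := by
      have hg' := hg t (j₁ + 1) (j₂ - 1); rw [sub_add_cancel] at hg'
      have hq' := hqq t (j₁ + 1) (j₂ - 1); rw [sub_add_cancel] at hq'
      rw [hg', ← hq', ginv' t (j₁ + 1) j₂]
      simp only [Matrix.mul_assoc]
    have hθel : θ t (j₁ + 1) j₂
        = -(θ t j₁ (j₂ + 1) * P t j₁ j₂)
          - g₀ t j₁ (j₂ + 1) * (g₀ t (j₁ + 1) (j₂ + 1))⁻¹ * θ t (j₁ + 1) (j₂ + 1) := by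
      have h := hθ1 t (j₁ + 1) (j₂ + 1)
      simp only [add_sub_cancel_right] at h
      rw [hP2] at h
      exact h
    have hQm : Q t j₁ (j₂ - 1) = Q t j₁ j₂ := by
      have h := hQ2 t j₁ (j₂ - 1); rw [sub_add_cancel] at h; exact h.symm
    have hηel : η t j₁ j₂
        = -(Q t j₁ j₂ * η t (j₁ + 1) (j₂ - 1))
          - η t j₁ (j₂ - 1) * (g₀ t j₁ (j₂ - 1) * (g₀ t (j₁ + 1) (j₂ - 1))⁻¹) := by
      have h := hη1 t j₁ (j₂ - 1)
      rw [sub_add_cancel, hQm] at h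
      exact h
    rw [hγ₂2 t j₁ j₂, hgg2, hgg1m, P4core t j₁ j₂, P2core t j₁ j₂, hη2 t j₁ j₂,
      hθ2 t (j₁ + 1) j₂, hθel, hηel]
    simp only [sub_eq_add_neg, Matrix.mul_add, Matrix.add_mul, Matrix.mul_neg,
      Matrix.neg_mul, neg_neg, Matrix.mul_one, Matrix.one_mul, Matrix.zero_mul,
      Matrix.mul_zero, zero_add, add_zero, Matrix.mul_assoc, cg, cg', cO, cO']
    abel
  · -- (2)
    intro t j₁ j₂
    rw [keyA t (j₁ + 1) j₂]
    have hggq : g t j₁ j₂ * (g t (j₁ + 1) j₂)⁻¹ * qq t (j₁ + 1) j₂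
        = (1 - qq t j₁ j₂ * η t j₁ j₂) * (g₀ t j₁ j₂ * ((g₀ t (j₁ + 1) j₂)⁻¹
            * (θ t (j₁ + 1) j₂ * (Om t (j₁ + 1) j₂)⁻¹))) := by
      rw [hg t j₁ j₂, ginv' t (j₁ + 1) j₂, hqq t (j₁ + 1) j₂]
      have he : (1 : Matrix (Fin m) (Fin m) ℂ)
          - θ t j₁ j₂ * (Om t j₁ (j₂ + 1))⁻¹ * η t j₁ j₂
          = 1 - qq t j₁ j₂ * η t j₁ j₂ := by rw [hqq t j₁ j₂]
      rw [he]
      calc (1 - qq t j₁ j₂ * η t j₁ j₂) * g₀ t j₁ j₂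
            * ((g₀ t (j₁ + 1) j₂)⁻¹ * (1 + θ t (j₁ + 1) j₂ * rr t (j₁ + 1) j₂))
            * (θ t (j₁ + 1) j₂ * (Om t (j₁ + 1) (j₂ + 1))⁻¹)
          = (1 - qq t j₁ j₂ * η t j₁ j₂) * (g₀ t j₁ j₂ * ((g₀ t (j₁ + 1) j₂)⁻¹
              * ((1 + θ t (j₁ + 1) j₂ * rr t (j₁ + 1) j₂)
                * (θ t (j₁ + 1) j₂ * (Om t (j₁ + 1) (j₂ + 1))⁻¹)))) := by
            simp only [Matrix.mul_assoc]
        _ = _ := by rw [keyD t (j₁ + 1) j₂]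
    rw [hggq, P2core t j₁ j₂]
    simp only [Matrix.mul_assoc]
  · -- (3)
    intro t j₁ j₂ a b
    have mdOminv : MD (fun s => (Om s j₁ (j₂ + 1))⁻¹)
        (-((Om t j₁ (j₂ + 1))⁻¹ * Omt t j₁ (j₂ + 1) * (Om t j₁ (j₂ + 1))⁻¹)) t :=
      MD.inv (fun s => hOminv s j₁ (j₂ + 1)) (fun a b => hOmt t j₁ (j₂ + 1) a b)
    have mdθ : MD (fun s => θ s j₁ j₂) (θt t j₁ j₂) t := fun a b => hθt t j₁ j₂ a b
    have md2 : MD (fun s => qq s j₁ j₂)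
        (θt t j₁ j₂ * (Om t j₁ (j₂ + 1))⁻¹
          + θ t j₁ j₂ * -((Om t j₁ (j₂ + 1))⁻¹ * Omt t j₁ (j₂ + 1) * (Om t j₁ (j₂ + 1))⁻¹)) t :=
      (mdθ.mul mdOminv).congr (fun s => hqq s j₁ j₂)
    refine (md2.congr' ?_) a b
    rw [keyA t j₁ (j₂ + 1)]
    have hOmt01 : Omt t j₁ (j₂ + 1)
        = η t j₁ j₂ * (g₀ t j₁ j₂ * ((g₀ t j₁ (j₂ + 1))⁻¹ * θ t j₁ (j₂ + 1)))
          - γ₂ t j₁ j₂ := by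
      rw [hOm3 t j₁ (j₂ + 1), hη2 t j₁ (j₂ + 1)]
      simp only [add_sub_cancel_right]
      rw [hγ₂2 t j₁ j₂]
      simp only [Matrix.neg_mul, neg_neg, Matrix.mul_assoc]
    rw [hg t j₁ j₂, ginv' t j₁ (j₂ + 1), hqq t j₁ (j₂ + 1)]
    have he : (1 : Matrix (Fin m) (Fin m) ℂ)
        - θ t j₁ j₂ * (Om t j₁ (j₂ + 1))⁻¹ * η t j₁ j₂
        = 1 - qq t j₁ j₂ * η t j₁ j₂ := by rw [hqq t j₁ j₂]
    rw [he]
    have hkd : (1 - qq t j₁ j₂ * η t j₁ j₂) * g₀ t j₁ j₂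
          * ((g₀ t j₁ (j₂ + 1))⁻¹ * (1 + θ t j₁ (j₂ + 1) * rr t j₁ (j₂ + 1)))
          * (θ t j₁ (j₂ + 1) * (Om t j₁ (j₂ + 1 + 1))⁻¹)
        = (1 - qq t j₁ j₂ * η t j₁ j₂) * (g₀ t j₁ j₂ * ((g₀ t j₁ (j₂ + 1))⁻¹
            * (θ t j₁ (j₂ + 1) * (Om t j₁ (j₂ + 1))⁻¹))) := by
      calc (1 - qq t j₁ j₂ * η t j₁ j₂) * g₀ t j₁ j₂
          * ((g₀ t j₁ (j₂ + 1))⁻¹ * (1 + θ t j₁ (j₂ + 1) * rr t j₁ (j₂ + 1)))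
          * (θ t j₁ (j₂ + 1) * (Om t j₁ (j₂ + 1 + 1))⁻¹)
          = (1 - qq t j₁ j₂ * η t j₁ j₂) * (g₀ t j₁ j₂ * ((g₀ t j₁ (j₂ + 1))⁻¹
              * ((1 + θ t j₁ (j₂ + 1) * rr t j₁ (j₂ + 1))
                * (θ t j₁ (j₂ + 1) * (Om t j₁ (j₂ + 1 + 1))⁻¹)))) := by
            simp only [Matrix.mul_assoc]
        _ = _ := by rw [keyD t j₁ (j₂ + 1)]
    rw [hkd, hOmt01, hθ2 t j₁ j₂, hqq t j₁ j₂]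
    simp only [sub_eq_add_neg, Matrix.mul_add, Matrix.add_mul, Matrix.mul_neg,
      Matrix.neg_mul, neg_neg, Matrix.mul_one, Matrix.one_mul, Matrix.mul_assoc]
    abel
  · -- (4)
    intro t j₁ j₂
    rw [keyB t j₁ j₂]
    have hgg : rr t j₁ j₂ * (g t j₁ j₂ * (g t (j₁ + 1) j₂)⁻¹)
        = (Om t j₁ (j₂ + 1))⁻¹ * (η t j₁ j₂ * (g₀ t j₁ j₂ * ((g₀ t (j₁ + 1) j₂)⁻¹
            * (1 + θ t (j₁ + 1) j₂ * rr t (j₁ + 1) j₂)))) := by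
      rw [hg t j₁ j₂, ginv' t (j₁ + 1) j₂]
      have he : (1 : Matrix (Fin m) (Fin m) ℂ)
          - θ t j₁ j₂ * (Om t j₁ (j₂ + 1))⁻¹ * η t j₁ j₂
          = 1 - qq t j₁ j₂ * η t j₁ j₂ := by rw [hqq t j₁ j₂]
      rw [he]
      calc rr t j₁ j₂ * ((1 - qq t j₁ j₂ * η t j₁ j₂) * g₀ t j₁ j₂
            * ((g₀ t (j₁ + 1) j₂)⁻¹ * (1 + θ t (j₁ + 1) j₂ * rr t (j₁ + 1) j₂)))
          = (rr t j₁ j₂ * (1 - qq t j₁ j₂ * η t j₁ j₂)) * (g₀ t j₁ j₂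
              * ((g₀ t (j₁ + 1) j₂)⁻¹ * (1 + θ t (j₁ + 1) j₂ * rr t (j₁ + 1) j₂))) := by
            simp only [Matrix.mul_assoc]
        _ = _ := by rw [rra t j₁ j₂]; simp only [Matrix.mul_assoc]
    rw [hgg, P4core t j₁ j₂]
    simp only [Matrix.mul_assoc]
  · -- (5)
    intro t j₁ j₂ a b
    have mdOminv : MD (fun s => (Om s j₁ j₂)⁻¹)
        (-((Om t j₁ j₂)⁻¹ * Omt t j₁ j₂ * (Om t j₁ j₂)⁻¹)) t :=
      MD.inv (fun s => hOminv s j₁ j₂) (fun a b => hOmt t j₁ j₂ a b)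
    have mdη : MD (fun s => η s j₁ j₂) (ηt t j₁ j₂) t := fun a b => hηt t j₁ j₂ a b
    have md2 : MD (fun s => rr s j₁ j₂)
        (-((Om t j₁ j₂)⁻¹ * Omt t j₁ j₂ * (Om t j₁ j₂)⁻¹) * η t j₁ j₂
          + (Om t j₁ j₂)⁻¹ * ηt t j₁ j₂) t :=
      (mdOminv.mul mdη).congr (fun s => hrr s j₁ j₂)
    refine (md2.congr' ?_) a b
    have hkB : (Om t j₁ (j₂ - 1))⁻¹ - rr t j₁ (j₂ - 1) * qq t j₁ (j₂ - 1)
        = (Om t j₁ j₂)⁻¹ := by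
      have h := keyB t j₁ (j₂ - 1); rw [sub_add_cancel] at h; exact h
    rw [hkB]
    have hrrg : rr t j₁ (j₂ - 1) * g t j₁ (j₂ - 1)
        = (Om t j₁ j₂)⁻¹ * (η t j₁ (j₂ - 1) * g₀ t j₁ (j₂ - 1)) := by
      have hg' := hg t j₁ (j₂ - 1); rw [sub_add_cancel] at hg'
      have hq' := hqq t j₁ (j₂ - 1); rw [sub_add_cancel] at hq'
      have ha := rra t j₁ (j₂ - 1); rw [sub_add_cancel] at ha
      rw [hg', ← hq', ← Matrix.mul_assoc, ha, Matrix.mul_assoc]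
    rw [hrrg, ginv' t j₁ j₂]
    have hOmt00 : Omt t j₁ j₂
        = η t j₁ (j₂ - 1) * g₀ t j₁ (j₂ - 1) * (g₀ t j₁ j₂)⁻¹ * θ t j₁ j₂
          - γ₂ t j₁ j₂ := by
      rw [hOm3 t j₁ j₂, hη2 t j₁ j₂]
      simp only [Matrix.neg_mul, neg_neg]
    rw [hOmt00, hη2 t j₁ j₂, hrr t j₁ j₂]
    simp only [sub_eq_add_neg, Matrix.mul_add, Matrix.add_mul, Matrix.mul_neg,
      Matrix.neg_mul, neg_neg, Matrix.mul_one, Matrix.one_mul, Matrix.mul_assoc]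
    abel
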